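/- Write p₁/q₂ = p/z in lowest terms (gcd(p, z) = 1) with z > 1, where β₁ = p₁/q₁, β₂ = p₂/q₂ are rationals in lowest terms. Suppose x = t/(m·zⁿ) with gcd(t, z) = 1 and m, n ≥ 1, and y = β₁·β₂·x - (k·β₁ + l) for integers k, l. Then y can be written as t'/(m'·z^{n+1}) with gcd(t', z) = 1 for some positive integer m'. -/

import Mathlib

theorem stmt_14 (p₁ q₁ p₂ q₂ p z : ℤ)
    (hp₁ : 0 < p₁) (hq₁ : 0 < q₁) (hp₂ : 0 < p₂) (hq₂ : 0 < q₂)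
    (hcop₁ : IsCoprime p₁ q₁) (hcop₂ : IsCoprime p₂ q₂)
    (hz : 1 < z) (hpz : IsCoprime p z) (hred : p₁ * z = p * q₂)
    (t m : ℤ) (n : ℕ) (hm : 1 ≤ m) (hn : 1 ≤ n) (htz : IsCoprime t z)
    (k l : ℤ) (x y : ℝ)
    (hx : x = (t : ℝ) / ((m : ℝ) * (z : ℝ) ^ n))
    (hy : y = ((p₁ : ℝ) / q₁) * ((p₂ : ℝ) / q₂) * x
      - ((k : ℝ) * ((p₁ : ℝ) / q₁) + (l : ℝ))) :
    ∃ t' m' : ℤ, 0 < m' ∧ IsCoprime t' z ∧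
      y = (t' : ℝ) / ((m' : ℝ) * (z : ℝ) ^ (n + 1)) := by
  have hzq₂ : z ∣ q₂ := by
    have : z ∣ p * q₂ := ⟨p₁, by linarith [hred]⟩
    exact (IsCoprime.dvd_of_dvd_mul_left hpz.symm this)
  have hp₂z : IsCoprime p₂ z := hcop₂.of_isCoprime_of_dvd_right hzq₂
  refine ⟨p * p₂ * t + z * (-(m * z ^ n * (k * p₁ + l * q₁))), q₁ * m,
    by positivity, ((hpz.mul_left hp₂z).mul_left htz).add_mul_left_left _, ?_⟩
  obtain ⟨c, hc⟩ := hzq₂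
  have hc0 : c ≠ 0 := by
    rintro rfl; simp at hc; omega
  have hq₁0 : (q₁ : ℝ) ≠ 0 := by positivity
  have hq₂0 : (q₂ : ℝ) ≠ 0 := by positivity
  have hm0 : (m : ℝ) ≠ 0 := by positivity
  have hz0 : (z : ℝ) ≠ 0 := by positivity
  have hred' : (p₁ : ℝ) * z = p * q₂ := by exact_mod_cast hred
  subst hy hx
  field_simp
  push_cast
  linear_combination ((p₂:ℝ) * t * z^n * q₁ * m) * hred'
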